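/- Fix a real p ∈ (0,1) and an integer K ≥ 2, and let 𝒮 be the collection of subsets of {1,…,K} of size at least 2. Define λ* : 𝒮 → ℝ by λ*({n, n+1, …, K}) = (1−p^{K−n+1})/(K−1+p) for each n ∈ {2,…,K−1}, λ*({1,…,K}) = (1−p^K)/((1−p)·(K−1+p)), and λ*(S) = 0 for all other S ∈ 𝒮. Then λ*(S) ≥ 0 for all S ∈ 𝒮, Σ_{S∈𝒮} λ*(S) = 1, and for every m ∈ {1,…,K−1}: Σ_{S∈𝒮} λ*(S)·d_S(σ̂_m) = log(1/p)·(1−p)/(K−1+p). -/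

import Mathlib

/-- Ordinal Attraction choice probability of item `i` from display set `S`
under the ranking `σ`. -/
noncomputable def oa {K : ℕ} (p : ℝ) (σ : Equiv.Perm (Fin K))
    (S : Finset (Fin K)) (i : Fin K) : ℝ :=
  (1 - p) * p ^ ((S.filter fun j => σ j ≤ σ i).card - 1) / (1 - p ^ S.card)

/-- `d_S(σ)`: KL divergence on `S` between the OA model with the identity
ranking and the OA model with ranking `σ`. -/
noncomputable def dS {K : ℕ} (p : ℝ) (S : Finset (Fin K)) (σ : Equiv.Perm (Fin K)) : ℝ :=
  ∑ i ∈ S, oa p 1 S i * Real.log (oa p 1 S i / oa p σ S i)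

/-- The adjacent transposition `σ̂_m` swapping (0-indexed) items `m` and `m+1`. -/
def adjSwap (K : ℕ) (m : ℕ) : Equiv.Perm (Fin K) :=
  if h : m + 1 < K then Equiv.swap ⟨m, Nat.lt_of_succ_lt h⟩ ⟨m + 1, h⟩ else 1

/-- The nested "tail" display set `{n, n+1, …, K−1}` (0-indexed). -/
def tailSet (K : ℕ) (n : ℕ) : Finset (Fin K) :=
  Finset.univ.filter fun j : Fin K => n ≤ (j : ℕ)

/-- The optimal nested allocation `λ*`: `λ*(tail n) = (1−p^{K−n})/(K−1+p)` for
`n ∈ {1,…,K−2}`, `λ*(full set) = (1−p^K)/((1−p)(K−1+p))`, and `λ* = 0`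
elsewhere. -/
noncomputable def lamStar (p : ℝ) (K : ℕ) (S : Finset (Fin K)) : ℝ :=
  (if S = tailSet K 0 then (1 - p ^ K) / ((1 - p) * ((K : ℝ) - 1 + p)) else 0)
  + ∑ n ∈ Finset.Icc 1 (K - 2),
      (if S = tailSet K n then (1 - p ^ (K - n)) / ((K : ℝ) - 1 + p) else 0)


section Aux

variable {K n m : ℕ}

lemma mem_tailSet {j : Fin K} : j ∈ tailSet K n ↔ n ≤ (j : ℕ) := by
  simp [tailSet]

lemma tailSet_card (hn : n < K) : (tailSet K n).card = K - n := by
  have h : tailSet K n = Finset.Ici (⟨n, hn⟩ : Fin K) := by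
    ext j; simp [tailSet, Fin.le_def]
  rw [h, Fin.card_Ici]

lemma rank_id {i : Fin K} (hi : n ≤ (i : ℕ)) :
    ((tailSet K n).filter fun j => j ≤ i).card = (i : ℕ) - n + 1 := by
  have hnK : n < K := lt_of_le_of_lt hi i.isLt
  have h : (tailSet K n).filter (fun j => j ≤ i) = Finset.Icc (⟨n, hnK⟩ : Fin K) i := by
    ext j
    simp only [tailSet, Finset.mem_filter, Finset.mem_univ, true_and, Finset.mem_Icc,
      Fin.le_def]
  rw [h, Fin.card_Icc]
  simp only [Fin.val_mk]
  omega

lemma adjSwap_apply (h : m + 1 < K) (j : Fin K) :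
    ((adjSwap K m j : Fin K) : ℕ)
      = if (j : ℕ) = m then m + 1 else if (j : ℕ) = m + 1 then m else j := by
  rw [adjSwap, dif_pos h]
  simp only [Equiv.swap_apply_def, apply_ite Fin.val]
  split_ifs <;> simp_all [Fin.ext_iff]

lemma rank_swap (h : m + 1 < K) (hnm : n ≤ m) {i : Fin K} (hi : n ≤ (i : ℕ)) :
    ((tailSet K n).filter fun j => adjSwap K m j ≤ adjSwap K m i).card
      = ((adjSwap K m i : Fin K) : ℕ) - n + 1 := by
  have key : ∀ j : Fin K, n ≤ (j : ℕ) ↔ n ≤ ((adjSwap K m j : Fin K) : ℕ) := by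
    intro j; rw [adjSwap_apply h]; split_ifs <;> omega
  have hσi : n ≤ ((adjSwap K m i : Fin K) : ℕ) := (key i).mp hi
  rw [← rank_id hσi]
  apply Finset.card_nbij' (fun j => adjSwap K m j) (fun j => (adjSwap K m).symm j)
  · intro a ha
    simp only [Finset.mem_coe, Finset.mem_filter, mem_tailSet, Fin.le_def] at ha ⊢
    exact ⟨(key a).mp ha.1, ha.2⟩
  · intro b hb
    simp only [Finset.mem_coe, Finset.mem_filter, mem_tailSet, Fin.le_def] at hb ⊢
    constructor
    · apply (key ((adjSwap K m).symm b)).mpr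
      simpa using hb.1
    · simpa using hb.2
  · intro a _; simp
  · intro b _; simp

lemma oa_id (p : ℝ) {i : Fin K} (hi : n ≤ (i : ℕ)) :
    oa p 1 (tailSet K n) i = (1 - p) * p ^ ((i : ℕ) - n) / (1 - p ^ (K - n)) := by
  have hnK : n < K := lt_of_le_of_lt hi i.isLt
  have hr : ((tailSet K n).filter fun j => (1 : Equiv.Perm (Fin K)) j ≤ (1 : Equiv.Perm (Fin K)) i).card
      = (i : ℕ) - n + 1 := by
    exact rank_id hi
  rw [oa, hr, tailSet_card hnK, Nat.add_sub_cancel]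

lemma oa_swap (p : ℝ) (h : m + 1 < K) (hnm : n ≤ m) {i : Fin K} (hi : n ≤ (i : ℕ)) :
    oa p (adjSwap K m) (tailSet K n) i
      = (1 - p) * p ^ (((adjSwap K m i : Fin K) : ℕ) - n) / (1 - p ^ (K - n)) := by
  have hnK : n < K := lt_of_le_of_lt hi i.isLt
  rw [oa, rank_swap h hnm hi, tailSet_card hnK, Nat.add_sub_cancel]

lemma denom_pos {p : ℝ} (hp0 : 0 < p) (hp1 : p < 1) (hn : n < K) :
    0 < 1 - p ^ (K - n) := by
  have := pow_lt_one₀ hp0.le hp1 (by omega : K - n ≠ 0)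
  linarith

lemma oa_id_pos {p : ℝ} (hp0 : 0 < p) (hp1 : p < 1) {i : Fin K} (hi : n ≤ (i : ℕ)) :
    0 < oa p 1 (tailSet K n) i := by
  have hnK : n < K := lt_of_le_of_lt hi i.isLt
  rw [oa_id p hi]
  have hd := denom_pos hp0 hp1 hnK
  have h1 : (0:ℝ) < 1 - p := by linarith
  positivity

lemma dS_tail_zero (p : ℝ) (h : m + 1 < K) (hmn : m < n) :
    dS p (tailSet K n) (adjSwap K m) = 0 := by
  rw [dS]
  apply Finset.sum_eq_zero
  intro i hiS
  have hi : n ≤ (i : ℕ) := mem_tailSet.mp hiS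
  have hfeq : ((tailSet K n).filter fun j => adjSwap K m j ≤ adjSwap K m i)
      = ((tailSet K n).filter fun j => (1 : Equiv.Perm (Fin K)) j ≤ (1 : Equiv.Perm (Fin K)) i) := by
    apply Finset.filter_congr
    intro j hj
    have hjn : n ≤ (j : ℕ) := mem_tailSet.mp hj
    simp only [Equiv.Perm.coe_one, id_eq, Fin.le_def, adjSwap_apply h]
    split_ifs <;> omega
  have hoa : oa p (adjSwap K m) (tailSet K n) i = oa p 1 (tailSet K n) i := by
    rw [oa, oa, hfeq]
  rw [hoa]
  rcases eq_or_ne (oa p 1 (tailSet K n) i) 0 with h0 | h0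
  · simp [h0]
  · rw [div_self h0, Real.log_one, mul_zero]

lemma dS_tail {p : ℝ} (hp0 : 0 < p) (hp1 : p < 1) (h : m + 1 < K) (hnm : n ≤ m) :
    dS p (tailSet K n) (adjSwap K m)
      = Real.log (1 / p) * ((1 - p) ^ 2 * p ^ (m - n) / (1 - p ^ (K - n))) := by
  have hmK : m < K := Nat.lt_of_succ_lt h
  have hnK : n < K := lt_of_le_of_lt hnm hmK
  set a : Fin K := ⟨m, hmK⟩ with ha_def
  set b : Fin K := ⟨m + 1, h⟩ with hb_def
  have ha : a ∈ tailSet K n := mem_tailSet.mpr hnm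
  have hb : b ∈ tailSet K n := mem_tailSet.mpr (by simp only [hb_def, Fin.val_mk]; omega)
  have hab : a ≠ b := by simp [ha_def, hb_def, Fin.ext_iff]
  have hsub : ({a, b} : Finset (Fin K)) ⊆ tailSet K n := by
    intro x hx
    rcases Finset.mem_insert.mp hx with rfl | hx
    · exact ha
    · rw [Finset.mem_singleton.mp hx]; exact hb
  have hσa : ((adjSwap K m a : Fin K) : ℕ) = m + 1 := by
    rw [adjSwap_apply h]; simp [ha_def]
  have hσb : ((adjSwap K m b : Fin K) : ℕ) = m := by
    rw [adjSwap_apply h]; simp [hb_def]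
  have hzero : ∀ x ∈ tailSet K n, x ∉ ({a, b} : Finset (Fin K)) →
      oa p 1 (tailSet K n) x * Real.log (oa p 1 (tailSet K n) x / oa p (adjSwap K m) (tailSet K n) x) = 0 := by
    intro x hx hxab
    have hxn : n ≤ (x : ℕ) := mem_tailSet.mp hx
    have hxa : (x : ℕ) ≠ m := by
      intro hc; exact hxab (by simp [Finset.mem_insert, ha_def, Fin.ext_iff, hc])
    have hxb : (x : ℕ) ≠ m + 1 := by
      intro hc; exact hxab (by
        simp [Finset.mem_insert, Finset.mem_singleton, hb_def, Fin.ext_iff, hc])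
    have hσx : ((adjSwap K m x : Fin K) : ℕ) = (x : ℕ) := by
      rw [adjSwap_apply h]; simp [hxa, hxb]
    have heq : oa p (adjSwap K m) (tailSet K n) x = oa p 1 (tailSet K n) x := by
      rw [oa_swap p h hnm hxn, oa_id p hxn, hσx]
    rw [heq, div_self (ne_of_gt (oa_id_pos hp0 hp1 hxn)), Real.log_one, mul_zero]
  rw [dS, ← Finset.sum_subset hsub hzero, Finset.sum_pair hab]
  -- now compute the two terms
  have hd := denom_pos hp0 hp1 hnK
  set D : ℝ := 1 - p ^ (K - n) with hD_def
  set A : ℝ := (1 - p) * p ^ (m - n) / D with hA_def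
  have hApos : 0 < A := by
    have h1 : (0:ℝ) < 1 - p := by linarith
    positivity
  have hm1n : m + 1 - n = (m - n) + 1 := by omega
  have hoa1a : oa p 1 (tailSet K n) a = A := by rw [oa_id p hnm]
  have hoa1b : oa p 1 (tailSet K n) b = A * p := by
    rw [oa_id p (show n ≤ (b:ℕ) by simp [hb_def]; omega)]
    simp only [hb_def, Fin.val_mk]
    rw [hm1n, pow_succ, hA_def]; ring
  have hoaσa : oa p (adjSwap K m) (tailSet K n) a = A * p := by
    rw [oa_swap p h hnm hnm, hσa, hm1n, pow_succ, hA_def]; ring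
  have hoaσb : oa p (adjSwap K m) (tailSet K n) b = A := by
    rw [oa_swap p h hnm (show n ≤ (b:ℕ) by simp [hb_def]; omega), hσb]
  rw [hoa1a, hoa1b, hoaσa, hoaσb]
  have hr1 : A / (A * p) = 1 / p := by
    rw [div_mul_eq_div_div, div_self (ne_of_gt hApos)]
  have hr2 : A * p / A = p := by
    rw [mul_comm, mul_div_assoc, div_self (ne_of_gt hApos), mul_one]
  rw [hr1, hr2]
  have hlog : Real.log p = - Real.log (1 / p) := by
    rw [one_div, Real.log_inv, neg_neg]
  rw [hlog, hA_def]
  ring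

end Aux

/-- Primal feasibility (Lemma EC.6): `λ*` is a nonnegative probability
allocation on the display sets of size `≥ 2`, and for every adjacent
transposition `σ̂_m` one has
`∑_S λ*(S)·d_S(σ̂_m) = log(1/p)·(1−p)/(K−1+p)`. -/
theorem stmt7 (p : ℝ) (hp0 : 0 < p) (hp1 : p < 1) (K : ℕ) (hK : 2 ≤ K) :
    (∀ S : Finset (Fin K), 2 ≤ S.card → 0 ≤ lamStar p K S)
    ∧ (∑ S ∈ Finset.univ.filter (fun S : Finset (Fin K) => 2 ≤ S.card),
        lamStar p K S) = 1
    ∧ ∀ m : ℕ, m + 1 < K →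
        (∑ S ∈ Finset.univ.filter (fun S : Finset (Fin K) => 2 ≤ S.card),
            lamStar p K S * dS p S (adjSwap K m))
          = Real.log (1 / p) * (1 - p) / ((K : ℝ) - 1 + p) := by
  have hK2 : (2:ℝ) ≤ (K:ℝ) := by exact_mod_cast hK
  have hDpos : (0:ℝ) < (K:ℝ) - 1 + p := by linarith
  have h1p : (0:ℝ) < 1 - p := by linarith
  have hpK : p ^ K < 1 := pow_lt_one₀ hp0.le hp1 (by omega)
  have hmemT : ∀ n, n ≤ K - 2 →
      tailSet K n ∈ Finset.univ.filter (fun S : Finset (Fin K) => 2 ≤ S.card) := by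
    intro n hn
    rw [Finset.mem_filter]
    refine ⟨Finset.mem_univ _, ?_⟩
    rw [tailSet_card (by omega)]
    omega
  refine ⟨?_, ?_, ?_⟩
  · -- nonnegativity
    intro S hS
    rw [lamStar]
    apply add_nonneg
    · split_ifs
      · apply div_nonneg (by linarith) (by positivity)
      · exact le_refl 0
    · apply Finset.sum_nonneg
      intro n _
      split_ifs
      · apply div_nonneg
        · have := pow_le_one₀ hp0.le hp1.le (n := K - n); linarith
        · linarith
      · exact le_refl 0
  · -- sums to one
    simp only [lamStar]
    rw [Finset.sum_add_distrib, Finset.sum_comm,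
      Finset.sum_ite_eq' _ (tailSet K 0)
        (fun _ => (1 - p ^ K) / ((1 - p) * ((K : ℝ) - 1 + p))),
      if_pos (hmemT 0 (by omega))]
    have h2 : ∀ n ∈ Finset.Icc 1 (K - 2),
        (∑ S ∈ Finset.univ.filter (fun S : Finset (Fin K) => 2 ≤ S.card),
          if S = tailSet K n then (1 - p ^ (K - n)) / ((K : ℝ) - 1 + p) else 0)
        = (1 - p ^ (K - n)) / ((K : ℝ) - 1 + p) := by
      intro n hn
      simp only [Finset.mem_Icc] at hn
      rw [Finset.sum_ite_eq' _ (tailSet K n)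
        (fun _ => (1 - p ^ (K - n)) / ((K : ℝ) - 1 + p)), if_pos (hmemT n hn.2)]
    rw [Finset.sum_congr rfl h2]
    have hreidx : (∑ n ∈ Finset.Icc 1 (K - 2), (1 - p ^ (K - n)) / ((K:ℝ) - 1 + p))
        = ∑ j ∈ Finset.Ico 2 K, (1 - p ^ j) / ((K:ℝ) - 1 + p) := by
      apply Finset.sum_nbij' (fun n => K - n) (fun j => K - j)
      · intro a ha; simp only [Finset.mem_Icc, Finset.mem_Ico] at *; omega
      · intro a ha; simp only [Finset.mem_Icc, Finset.mem_Ico] at *; omega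
      · intro a ha; simp only [Finset.mem_Icc] at ha; omega
      · intro a ha; simp only [Finset.mem_Ico] at ha; omega
      · intro a ha; rfl
    rw [hreidx, ← Finset.sum_div, Finset.sum_Ico_eq_sub _ hK]
    have hrangeK : ∑ j ∈ Finset.range K, (1 - p ^ j) = (K:ℝ) - (p ^ K - 1) / (p - 1) := by
      rw [Finset.sum_sub_distrib, Finset.sum_const, Finset.card_range, nsmul_eq_mul,
        mul_one, geom_sum_eq (ne_of_lt hp1)]
    have hrange2 : ∑ j ∈ Finset.range 2, (1 - p ^ j) = 1 - p := by
      simp [Finset.sum_range_succ]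
      ring
    rw [hrangeK, hrange2]
    have hne1 : (1:ℝ) - p ≠ 0 := ne_of_gt h1p
    have hne2 : p - 1 ≠ 0 := by intro hc; apply hne1; linarith
    have hne3 : (K:ℝ) - 1 + p ≠ 0 := ne_of_gt hDpos
    field_simp
    ring
  · -- adjacent swap equations
    intro m hm
    simp only [lamStar, add_mul, Finset.sum_mul, ite_mul, zero_mul]
    rw [Finset.sum_add_distrib, Finset.sum_comm,
      Finset.sum_ite_eq' _ (tailSet K 0)
        (fun S => (1 - p ^ K) / ((1 - p) * ((K : ℝ) - 1 + p)) * dS p S (adjSwap K m)),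
      if_pos (hmemT 0 (by omega))]
    have h2 : ∀ n ∈ Finset.Icc 1 (K - 2),
        (∑ S ∈ Finset.univ.filter (fun S : Finset (Fin K) => 2 ≤ S.card),
          if S = tailSet K n then (1 - p ^ (K - n)) / ((K : ℝ) - 1 + p) * dS p S (adjSwap K m) else 0)
        = (1 - p ^ (K - n)) / ((K : ℝ) - 1 + p) * dS p (tailSet K n) (adjSwap K m) := by
      intro n hn
      simp only [Finset.mem_Icc] at hn
      rw [Finset.sum_ite_eq' _ (tailSet K n)
        (fun S => (1 - p ^ (K - n)) / ((K : ℝ) - 1 + p) * dS p S (adjSwap K m)),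
        if_pos (hmemT n hn.2)]
    rw [Finset.sum_congr rfl h2]
    have hsplit : ∑ n ∈ Finset.Icc 1 (K - 2),
          (1 - p ^ (K - n)) / ((K : ℝ) - 1 + p) * dS p (tailSet K n) (adjSwap K m)
        = ∑ n ∈ Finset.Icc 1 m,
          (1 - p ^ (K - n)) / ((K : ℝ) - 1 + p) * dS p (tailSet K n) (adjSwap K m) := by
      symm
      apply Finset.sum_subset
      · intro x hx; simp only [Finset.mem_Icc] at *; omega
      · intro x hx hx2
        have hmx : m < x := by simp only [Finset.mem_Icc] at *; omega
        rw [dS_tail_zero p hm hmx, mul_zero]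
    rw [hsplit]
    have hterm : ∀ n ∈ Finset.Icc 1 m,
        (1 - p ^ (K - n)) / ((K:ℝ) - 1 + p) * dS p (tailSet K n) (adjSwap K m)
        = Real.log (1/p) * (1 - p)^2 / ((K:ℝ) - 1 + p) * p ^ (m - n) := by
      intro n hn
      simp only [Finset.mem_Icc] at hn
      rw [dS_tail hp0 hp1 hm hn.2]
      have hd := denom_pos hp0 hp1 (show n < K by omega)
      have hdne : (1:ℝ) - p ^ (K - n) ≠ 0 := ne_of_gt hd
      have hne3 : (K:ℝ) - 1 + p ≠ 0 := ne_of_gt hDpos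
      field_simp
    rw [Finset.sum_congr rfl hterm, ← Finset.mul_sum]
    have hgeo : ∑ n ∈ Finset.Icc 1 m, p ^ (m - n) = (p ^ m - 1) / (p - 1) := by
      rw [show (∑ n ∈ Finset.Icc 1 m, p ^ (m - n)) = ∑ j ∈ Finset.range m, p ^ j from ?_,
        geom_sum_eq (ne_of_lt hp1)]
      apply Finset.sum_nbij' (fun n => m - n) (fun j => m - j)
      · intro a ha; simp only [Finset.mem_Icc, Finset.mem_range] at *; omega
      · intro a ha; simp only [Finset.mem_Icc, Finset.mem_range] at *; omega
      · intro a ha; simp only [Finset.mem_Icc] at ha; omega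
      · intro a ha; simp only [Finset.mem_range] at ha; omega
      · intro a ha; rfl
    rw [hgeo, dS_tail hp0 hp1 hm (Nat.zero_le m)]
    simp only [Nat.sub_zero]
    have hne1 : (1:ℝ) - p ≠ 0 := ne_of_gt h1p
    have hne2 : p - 1 ≠ 0 := by intro hc; apply hne1; linarith
    have hne3 : (K:ℝ) - 1 + p ≠ 0 := ne_of_gt hDpos
    have hne4 : (1:ℝ) - p ^ K ≠ 0 := by intro hc; nlinarith
    field_simp
    ring
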